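/- Let m be a large integer, J = (−m/2, m/2] ∩ ℤ ∖ {0}, and (ε_h)_{h∈J} ∈ {−1,1}^J with ε_h = 1 for h ≥ 1 and ε_h = −1 for h ≤ −1 (h < 0). Define φ(n) = (1/√m)·∑_{h∈J} ε_h·e(−nh/m). Then |∑_{0≤n≤m/2} φ(n)| = (√m/π)·log m + O(√m). -/

import Mathlib

open Real


-- telescoping sin sum
lemma sin_tel (θ : ℝ) (H : ℕ) :
    2 * Real.sin (θ/2) * ∑ j ∈ Finset.range H, Real.sin ((j+1)*θ)
      = Real.cos (θ/2) - Real.cos ((2*H+1)*(θ/2)) := by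
  have key : ∀ j : ℕ, 2 * Real.sin (θ/2) * Real.sin ((j+1)*θ)
      = Real.cos ((2*j+1)*(θ/2)) - Real.cos ((2*(j+1)+1)*(θ/2)) := by
    intro j
    rw [Real.cos_sub_cos]
    have h1 : ((2*(j:ℝ)+1)*(θ/2) + (2*((j:ℝ)+1)+1)*(θ/2))/2 = ((j:ℝ)+1)*θ := by ring
    have h2 : ((2*(j:ℝ)+1)*(θ/2) - (2*((j:ℝ)+1)+1)*(θ/2))/2 = -(θ/2) := by ring
    push_cast
    rw [h1, h2, Real.sin_neg]
    ring
  rw [Finset.mul_sum]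
  have := Finset.sum_range_sub' (fun j : ℕ => Real.cos ((2*j+1)*(θ/2))) H
  push_cast at this ⊢
  rw [Finset.sum_congr rfl (fun j _ => key j), this]
  norm_num

-- cot bound
lemma cot_bound {x : ℝ} (h0 : 0 < x) (h2 : x ≤ π/2) :
    |Real.cos x / Real.sin x - 1/x| ≤ 2 := by
  have hpi := Real.pi_pos
  have hx2 : x ≤ 2 := by nlinarith [Real.pi_le_four]
  have hsin : 0 < Real.sin x := Real.sin_pos_of_pos_of_lt_pi h0 (by linarith)
  have hsinle : Real.sin x ≤ x := (Real.sin_lt h0).le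
  have hs2 : x ≤ 2 * Real.sin x := by
    have h' := Real.mul_le_sin h0.le h2
    have h4 : (1:ℝ)/2 ≤ 2/π := by
      rw [div_le_div_iff₀ (by norm_num) hpi]; nlinarith [Real.pi_le_four]
    nlinarith [mul_le_mul_of_nonneg_right h4 h0.le]
  have hcos : 1 - Real.cos x ≤ x^2/2 := by
    have hct : Real.cos x = 2 * Real.cos (x/2)^2 - 1 := by
      have := Real.cos_two_mul (x/2)
      rw [show 2*(x/2) = x by ring] at this
      linarith
    have hsc := Real.sin_sq_add_cos_sq (x/2)
    have hs : Real.sin (x/2) ≤ x/2 := (Real.sin_lt (by linarith)).le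
    have hs' : -(x/2) ≤ Real.sin (x/2) := by
      nlinarith [Real.sin_nonneg_of_nonneg_of_le_pi (x := x/2) (by linarith) (by linarith)]
    nlinarith
  have hup : Real.cos x / Real.sin x ≤ 1/x := by
    rcases lt_or_eq_of_le h2 with h | h
    · have hc : 0 < Real.cos x := Real.cos_pos_of_mem_Ioo ⟨by linarith, h⟩
      have ht := Real.lt_tan h0 h
      rw [Real.tan_eq_sin_div_cos] at ht
      rw [div_le_div_iff₀ hsin h0]
      have := (lt_div_iff₀ hc).mp ht
      nlinarith
    · rw [h, Real.cos_pi_div_two, zero_div]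
      positivity
  have hlow : 1/x - Real.cos x / Real.sin x ≤ 2 := by
    rw [div_sub_div _ _ (ne_of_gt h0) (ne_of_gt hsin), div_le_iff₀ (by positivity)]
    nlinarith
  rw [abs_le]
  constructor <;> linarith


lemma sum_odd_part (g : ℕ → ℝ) (M : ℕ) :
    ∑ n ∈ Finset.range M, (1 - (-1:ℝ)^n) * g n = 2 * ∑ k ∈ Finset.range (M/2), g (2*k+1) := by
  induction M with
  | zero => simp
  | succ M ih =>
    rw [Finset.sum_range_succ, ih]
    rcases Nat.even_or_odd M with he | ho
    · have hp := Nat.even_iff.mp he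
      have h1 : (M+1)/2 = M/2 := by omega
      have h2 : (-1:ℝ)^M = 1 := he.neg_one_pow
      rw [h1, h2]; ring
    · have hp := Nat.odd_iff.mp ho
      have h1 : (M+1)/2 = M/2 + 1 := by omega
      have h2 : (-1:ℝ)^M = -1 := ho.neg_one_pow
      rw [h1, Finset.sum_range_succ, (show 2*(M/2)+1 = M by omega), h2]; ring

lemma neg_one_pow_sum_abs (M : ℕ) : |∑ n ∈ Finset.range M, (-1:ℝ)^n| ≤ 1 := by
  have : ∀ M : ℕ, (∑ n ∈ Finset.range M, (-1:ℝ)^n) = if Even M then 0 else 1 := by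
    intro M
    induction M with
    | zero => simp
    | succ M ih =>
      rw [Finset.sum_range_succ, ih]
      rcases Nat.even_or_odd M with he | ho
      · rw [if_pos he, he.neg_one_pow, if_neg (by simpa [Nat.even_add_one] using he)]
        ring
      · have hne : ¬ Even M := Nat.not_even_iff_odd.mpr ho
        rw [if_neg hne, ho.neg_one_pow, if_pos (by simpa [Nat.even_add_one] using hne)]
        ring
  rw [this]
  split <;> norm_num

lemma harm_bounds (K : ℕ) (hK : 1 ≤ K) :
    Real.log (K+1) ≤ ∑ k ∈ Finset.range K, (1:ℝ)/(k+1) ∧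
    ∑ k ∈ Finset.range K, (1:ℝ)/(k+1) ≤ 1 + Real.log K := by
  have h1 : (harmonic K : ℝ) = ∑ k ∈ Finset.range K, (1:ℝ)/(k+1) := by
    rw [harmonic]
    push_cast
    simp [one_div]
  constructor
  · have h := log_add_one_le_harmonic K
    rw [h1] at h
    convert h using 2
    push_cast; ring
  · have h := harmonic_le_one_add_log K
    rw [h1] at h
    exact h

lemma odd_harm_bound (m : ℕ) (hm : 2 ≤ m) :
    |∑ k ∈ Finset.range ((m/2+1)/2), (1:ℝ)/(2*k+1) - Real.log m / 2| ≤ 3 := by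
  set K := (m/2+1)/2 with hKdef
  clear_value K
  have hK1 : 1 ≤ K := by omega
  obtain ⟨hlow, hup⟩ := harm_bounds K hK1
  have hlb : (1/2) * ∑ k ∈ Finset.range K, (1:ℝ)/(k+1) ≤ ∑ k ∈ Finset.range K, (1:ℝ)/(2*k+1) := by
    rw [Finset.mul_sum]
    apply Finset.sum_le_sum
    intro k _
    have e : (1:ℝ)/2 * (1/(k+1)) = 1/(2*k+2) := by
      field_simp
    rw [e]
    apply one_div_le_one_div_of_le (by positivity)
    push_cast; linarith
  have hub : ∑ k ∈ Finset.range K, (1:ℝ)/(2*k+1)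
      ≤ 1 + (1/2) * ∑ k ∈ Finset.range K, (1:ℝ)/(k+1) := by
    obtain ⟨K', rfl⟩ : ∃ K', K = K' + 1 := ⟨K - 1, by omega⟩
    rw [Finset.sum_range_succ']
    have step : ∑ k ∈ Finset.range K', (1:ℝ)/(2*(k+1)+1)
        ≤ (1/2) * ∑ k ∈ Finset.range K', (1:ℝ)/(k+1) := by
      rw [Finset.mul_sum]
      apply Finset.sum_le_sum
      intro k _
      have e : (1:ℝ)/2 * (1/(k+1)) = 1/(2*k+2) := by field_simp
      rw [e]
      apply one_div_le_one_div_of_le (by positivity)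
      push_cast; linarith
    have mono : (1/2:ℝ) * ∑ k ∈ Finset.range K', (1:ℝ)/(k+1)
        ≤ (1/2) * ∑ k ∈ Finset.range (K'+1), (1:ℝ)/(k+1) := by
      rw [Finset.sum_range_succ]
      have : (0:ℝ) ≤ 1/(K'+1) := by positivity
      linarith
    push_cast at step mono ⊢
    norm_num at step mono ⊢
    linarith
  -- bridge K to m
  have hm4 : (m:ℝ) ≤ 4*(K+1) := by
    have : m ≤ 4*(K+1) := by omega
    exact_mod_cast this
  have hKm : (K:ℝ) ≤ m := by exact_mod_cast (by omega : K ≤ m)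
  have hlogK1 : Real.log m - Real.log 4 ≤ Real.log (K+1) := by
    rw [← Real.log_div (by positivity) (by norm_num)]
    apply Real.log_le_log (by positivity)
    linarith
  have hlogK : Real.log K ≤ Real.log m := by
    apply Real.log_le_log (by exact_mod_cast hK1)
    exact hKm
  have hlog4 : Real.log 4 ≤ 3 := by
    nlinarith [Real.log_le_sub_one_of_pos (by norm_num : (0:ℝ) < 4)]
  rw [abs_le]
  constructor <;> nlinarith


lemma exp_real_mul_I (r : ℝ) :
    Complex.exp ((r:ℂ) * Complex.I) = (Real.cos r : ℂ) + (Real.sin r : ℂ) * Complex.I := by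
  rw [Complex.exp_mul_I]
  norm_cast

lemma inner_eval (m : ℕ) (hm : 2 ≤ m) (n : ℕ) :
    (∑ h ∈ ((Finset.Icc (-(m:ℤ)) (m:ℤ)).filter
        (fun h : ℤ => -(m:ℝ)/2 < (h:ℝ) ∧ (h:ℝ) ≤ (m:ℝ)/2 ∧ h ≠ 0)),
      (if 0 < h then (1:ℂ) else -1) *
        Complex.exp (-(2 * (π:ℂ) * Complex.I * (n:ℂ) * (h:ℂ) / (m:ℂ))))
    = (((∑ j ∈ Finset.range (m/2), Real.cos (((j:ℝ)+1)*(2*π*n/m))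
        - ∑ j ∈ Finset.range ((m-1)/2), Real.cos (((j:ℝ)+1)*(2*π*n/m)) : ℝ)) : ℂ)
      + ((-(∑ j ∈ Finset.range (m/2), Real.sin (((j:ℝ)+1)*(2*π*n/m))
          + ∑ j ∈ Finset.range ((m-1)/2), Real.sin (((j:ℝ)+1)*(2*π*n/m)) : ℝ)) : ℂ) * Complex.I := by
  have hm0 : (m:ℝ) ≠ 0 := by positivity
  -- Step 1: identify the index set
  have hset : ((Finset.Icc (-(m:ℤ)) (m:ℤ)).filter
        (fun h : ℤ => -(m:ℝ)/2 < (h:ℝ) ∧ (h:ℝ) ≤ (m:ℝ)/2 ∧ h ≠ 0))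
      = (Finset.Icc (1:ℤ) ((m/2 : ℕ) : ℤ)) ∪ (Finset.Icc (-(((m-1)/2 : ℕ) : ℤ)) (-1)) := by
    ext h
    simp only [Finset.mem_filter, Finset.mem_Icc, Finset.mem_union]
    have e1 : ((h:ℝ) ≤ (m:ℝ)/2) ↔ 2*h ≤ (m:ℤ) := by
      rw [le_div_iff₀ (by norm_num : (0:ℝ) < 2)]
      constructor <;> intro hh
      · exact_mod_cast (by push_cast; linarith : ((2*h : ℤ):ℝ) ≤ ((m:ℤ):ℝ))
      · have : ((2*h : ℤ):ℝ) ≤ ((m:ℤ):ℝ) := by exact_mod_cast hh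
        push_cast at this; linarith
    have e2 : (-(m:ℝ)/2 < (h:ℝ)) ↔ -(m:ℤ) < 2*h := by
      rw [div_lt_iff₀ (by norm_num : (0:ℝ) < 2)]
      constructor <;> intro hh
      · exact_mod_cast (by push_cast; linarith : ((-(m:ℤ) : ℤ):ℝ) < ((2*h : ℤ):ℝ))
      · have : ((-(m:ℤ) : ℤ):ℝ) < ((2*h : ℤ):ℝ) := by exact_mod_cast hh
        push_cast at this; linarith
    rw [e1, e2]
    omega
  rw [hset, Finset.sum_union (by
    rw [Finset.disjoint_left]
    intro a ha hb
    simp only [Finset.mem_Icc] at ha hb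
    omega)]
  -- Step 2: reindex positive part
  have inj1 : Function.Injective (fun j : ℕ => (j:ℤ)+1) := by intro a b h; simpa using h
  have inj2 : Function.Injective (fun j : ℕ => -(j:ℤ)-1) := by intro a b h; simpa using h
  have hmapp : (Finset.Icc (1:ℤ) ((m/2 : ℕ) : ℤ))
      = (Finset.range (m/2)).map ⟨fun j : ℕ => (j:ℤ)+1, inj1⟩ := by
    ext h
    simp only [Finset.mem_Icc, Finset.mem_map, Finset.mem_range, Function.Embedding.coeFn_mk]
    constructor
    · rintro ⟨h1, h2⟩
      exact ⟨(h-1).toNat, by omega, by omega⟩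
    · rintro ⟨j, hj, rfl⟩
      omega
  have hmapn : (Finset.Icc (-(((m-1)/2 : ℕ) : ℤ)) (-1))
      = (Finset.range ((m-1)/2)).map ⟨fun j : ℕ => -(j:ℤ)-1, inj2⟩ := by
    ext h
    simp only [Finset.mem_Icc, Finset.mem_map, Finset.mem_range, Function.Embedding.coeFn_mk]
    constructor
    · rintro ⟨h1, h2⟩
      exact ⟨(-h-1).toNat, by omega, by omega⟩
    · rintro ⟨j, hj, rfl⟩
      omega
  rw [hmapp, hmapn, Finset.sum_map, Finset.sum_map]
  simp only [Function.Embedding.coeFn_mk]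
  -- Step 3: evaluate terms
  have hterm1 : ∀ j : ℕ, (if (0:ℤ) < (j:ℤ)+1 then (1:ℂ) else -1) *
      Complex.exp (-(2 * (π:ℂ) * Complex.I * (n:ℂ) * (((j:ℤ)+1 : ℤ):ℂ) / (m:ℂ)))
      = (Real.cos (((j:ℝ)+1)*(2*π*n/m)) : ℂ) - (Real.sin (((j:ℝ)+1)*(2*π*n/m)) : ℂ) * Complex.I := by
    intro j
    rw [if_pos (by positivity)]
    have he : -(2 * (π:ℂ) * Complex.I * (n:ℂ) * (((j:ℤ)+1 : ℤ):ℂ) / (m:ℂ))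
        = ((-(((j:ℝ)+1)*(2*π*n/m)) : ℝ) : ℂ) * Complex.I := by
      push_cast
      ring
    rw [he, exp_real_mul_I, Real.cos_neg, Real.sin_neg]
    push_cast
    ring
  have hterm2 : ∀ j : ℕ, (if (0:ℤ) < -(j:ℤ)-1 then (1:ℂ) else -1) *
      Complex.exp (-(2 * (π:ℂ) * Complex.I * (n:ℂ) * ((-(j:ℤ)-1 : ℤ):ℂ) / (m:ℂ)))
      = -((Real.cos (((j:ℝ)+1)*(2*π*n/m)) : ℂ) + (Real.sin (((j:ℝ)+1)*(2*π*n/m)) : ℂ) * Complex.I) := by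
    intro j
    rw [if_neg (by omega)]
    have he : -(2 * (π:ℂ) * Complex.I * (n:ℂ) * ((-(j:ℤ)-1 : ℤ):ℂ) / (m:ℂ))
        = (((((j:ℝ)+1)*(2*π*n/m)) : ℝ) : ℂ) * Complex.I := by
      push_cast
      ring
    rw [he, exp_real_mul_I]
    ring
  rw [Finset.sum_congr rfl (fun j _ => hterm1 j), Finset.sum_congr rfl (fun j _ => hterm2 j)]
  simp only [Complex.ofReal_sub, Complex.ofReal_add, Complex.ofReal_neg, Complex.ofReal_sum,
    neg_add_rev, Finset.sum_sub_distrib, Finset.sum_add_distrib, Finset.sum_neg_distrib,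
    ← Finset.sum_mul]
  ring

lemma V_bound (m n : ℕ) (hm : 2 ≤ m) (hn1 : 1 ≤ n) (hn2 : n ≤ m/2) :
    |(∑ j ∈ Finset.range (m/2), Real.sin (((j:ℝ)+1)*(2*π*n/m))
      + ∑ j ∈ Finset.range ((m-1)/2), Real.sin (((j:ℝ)+1)*(2*π*n/m)))
     - (1 - (-1:ℝ)^n)*((m:ℝ)/(π*n))| ≤ 4 := by
  have hpi := Real.pi_pos
  have hm0 : (0:ℝ) < m := by positivity
  have hn0 : (0:ℝ) < n := by exact_mod_cast hn1
  have h2n : 2*n ≤ m := by omega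
  set ψ := π*n/m with hψdef
  have hψ0 : 0 < ψ := by positivity
  have hψ2 : ψ ≤ π/2 := by
    rw [hψdef, div_le_iff₀ hm0]
    have : (2:ℝ)*n ≤ m := by exact_mod_cast h2n
    nlinarith
  have hψpi : ψ < π := by linarith
  have hsψ : 0 < Real.sin ψ := Real.sin_pos_of_pos_of_lt_pi hψ0 hψpi
  clear_value ψ
  have harg : ∀ j : ℕ, ((j:ℝ)+1)*(2*π*n/m) = ((j:ℝ)+1)*(2*ψ) := by
    intro j; rw [hψdef]; ring
  have hinv : (m:ℝ)/(π*n) = 1/ψ := by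
    rw [hψdef]; field_simp
  rw [Finset.sum_congr rfl (fun j _ => congrArg Real.sin (harg j)), Finset.sum_congr rfl (fun j _ => congrArg Real.sin (harg j)), hinv]
  have htel : ∀ H : ℕ, ∑ j ∈ Finset.range H, Real.sin (((j:ℝ)+1)*(2*ψ))
      = (Real.cos ψ - Real.cos ((2*(H:ℝ)+1)*ψ)) / (2*Real.sin ψ) := by
    intro H
    have t := sin_tel (2*ψ) H
    rw [show (2*ψ)/2 = ψ by ring] at t
    rw [eq_div_iff (by positivity)]
    linarith [t]
  have hb : |1 - (-1:ℝ)^n| ≤ 2 := by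
    rcases Nat.even_or_odd n with h|h
    · rw [h.neg_one_pow]; norm_num
    · rw [h.neg_one_pow]; norm_num
  rcases Nat.even_or_odd m with he | ho
  · -- m even
    have hp := Nat.even_iff.mp he
    have n1 : 2*(m/2)+1 = m+1 := by omega
    have n2 : 2*((m-1)/2)+1 = m-1 := by omega
    have e1 : 2*((m/2:ℕ):ℝ)+1 = (m:ℝ)+1 := by
      have := congrArg (fun k : ℕ => (k:ℝ)) n1
      push_cast at this; linarith
    have e2 : 2*(((m-1)/2:ℕ):ℝ)+1 = (m:ℝ)-1 := by
      have := congrArg (fun k : ℕ => (k:ℝ)) n2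
      push_cast [Nat.cast_sub (show 1 ≤ m by omega)] at this
      linarith
    have a1 : ((m:ℝ)+1)*ψ = (n:ℝ)*π - (-ψ) := by
      rw [hψdef]; field_simp; ring
    have a2 : ((m:ℝ)-1)*ψ = (n:ℝ)*π - ψ := by
      rw [hψdef]; field_simp
    rw [htel, htel, e1, e2, a1, a2, Real.cos_nat_mul_pi_sub, Real.cos_nat_mul_pi_sub,
      Real.cos_neg]
    have key : (Real.cos ψ - (-1:ℝ)^n * Real.cos ψ)/(2*Real.sin ψ)
        + (Real.cos ψ - (-1:ℝ)^n * Real.cos ψ)/(2*Real.sin ψ)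
        - (1 - (-1:ℝ)^n)*(1/ψ)
        = (1 - (-1:ℝ)^n) * (Real.cos ψ/Real.sin ψ - 1/ψ) := by
      field_simp
      ring
    rw [key, abs_mul]
    calc |1 - (-1:ℝ)^n| * |Real.cos ψ/Real.sin ψ - 1/ψ| ≤ 2 * 2 :=
          mul_le_mul hb (cot_bound hψ0 hψ2) (abs_nonneg _) (by norm_num)
      _ = 4 := by norm_num
  · -- m odd
    have hp := Nat.odd_iff.mp ho
    have hrange : (m-1)/2 = m/2 := by omega
    have n1 : 2*(m/2)+1 = m := by omega
    have e1 : 2*((m/2:ℕ):ℝ)+1 = (m:ℝ) := by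
      have := congrArg (fun k : ℕ => (k:ℝ)) n1
      push_cast at this; linarith
    have a1 : (m:ℝ)*ψ = (n:ℝ)*π - 0 := by
      rw [hψdef]; field_simp; ring
    rw [hrange, htel, e1, a1, Real.cos_nat_mul_pi_sub, Real.cos_zero, mul_one]
    -- half angle
    set x := ψ/2 with hxdef
    have hψx : ψ = 2*x := by rw [hxdef]; ring
    have hx0 : 0 < x := by rw [hxdef]; positivity
    have hx4 : x ≤ π/4 := by rw [hxdef]; linarith
    have hsx : 0 < Real.sin x := Real.sin_pos_of_pos_of_lt_pi hx0 (by linarith)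
    have hcx : Real.cos (π/4) ≤ Real.cos x :=
      Real.cos_le_cos_of_nonneg_of_le_pi hx0.le (by linarith) hx4
    have hrt2 : (1:ℝ) ≤ Real.sqrt 2 := by
      nlinarith [Real.sq_sqrt (show (0:ℝ) ≤ 2 by norm_num), Real.sqrt_nonneg 2]
    have hcx2 : (1:ℝ)/2 ≤ Real.cos x := by
      rw [Real.cos_pi_div_four] at hcx
      linarith
    have hcx0 : 0 < Real.cos x := by linarith
    have hc2 : Real.cos ψ = 2*Real.cos x^2 - 1 := by
      rw [hψx]; exact Real.cos_two_mul x
    have hs2 : Real.sin ψ = 2*Real.sin x*Real.cos x := by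
      rw [hψx]; exact Real.sin_two_mul x
    clear_value x
    rcases Nat.even_or_odd n with hne | hno
    · rw [hne.neg_one_pow]
      have hnum : Real.cos ψ - 1 = -(2*Real.sin x^2) := by
        rw [hc2]; linarith [Real.sin_sq_add_cos_sq x]
      have key : (Real.cos ψ - 1)/(2*Real.sin ψ) + (Real.cos ψ - 1)/(2*Real.sin ψ)
          - (1 - (1:ℝ))*(1/ψ) = -(Real.sin x/Real.cos x) := by
        rw [hnum, hs2]
        field_simp
        ring
      rw [key, abs_neg, abs_div, abs_of_pos hsx, abs_of_pos hcx0, div_le_iff₀ hcx0]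
      linarith [Real.sin_le_one x]
    · rw [hno.neg_one_pow]
      have hnum : Real.cos ψ - (-1:ℝ) = 2*Real.cos x^2 := by
        rw [hc2]; ring
      have key : (Real.cos ψ - (-1:ℝ))/(2*Real.sin ψ) + (Real.cos ψ - (-1:ℝ))/(2*Real.sin ψ)
          - (1 - (-1:ℝ))*(1/ψ) = Real.cos x/Real.sin x - 1/x := by
        rw [hnum, hs2, hψx]
        field_simp
        ring
      rw [key]
      have := cot_bound hx0 (by linarith : x ≤ π/2)
      linarith [this, abs_le.mp this]

theorem large_partial_sum_example :
    ∃ K : ℝ, 0 < K ∧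
      ∀ (m : ℕ), 2 ≤ m →
        |norm
            (∑ n ∈ Finset.range (m / 2 + 1),
              ((Real.sqrt m : ℝ) : ℂ)⁻¹ *
                ∑ h ∈ ((Finset.Icc (-(m : ℤ)) m).filter
                    (fun h : ℤ => -(m : ℝ) / 2 < (h : ℝ) ∧ (h : ℝ) ≤ (m : ℝ) / 2 ∧ h ≠ 0)),
                  (if 0 < h then (1 : ℂ) else -1) *
                    Complex.exp (-(2 * (π : ℂ) * Complex.I * (n : ℂ) * (h : ℂ) / (m : ℂ)))) -
          Real.sqrt m / π * Real.log m| ≤ K * Real.sqrt m := by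
  refine ⟨100, by norm_num, fun m hm => ?_⟩
  have hpi := Real.pi_pos
  have hm0 : (0:ℝ) < m := by exact_mod_cast (by omega : 0 < m)
  set N := m/2 with hNdef
  set X := ∑ n ∈ Finset.range (N+1),
      (∑ j ∈ Finset.range (m/2), Real.cos (((j:ℝ)+1)*(2*π*n/m))
        - ∑ j ∈ Finset.range ((m-1)/2), Real.cos (((j:ℝ)+1)*(2*π*n/m))) with hXdef
  set Y := ∑ n ∈ Finset.range (N+1),
      (-(∑ j ∈ Finset.range (m/2), Real.sin (((j:ℝ)+1)*(2*π*n/m))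
          + ∑ j ∈ Finset.range ((m-1)/2), Real.sin (((j:ℝ)+1)*(2*π*n/m)))) with hYdef
  -- rewrite the complex sum
  have hmain : (∑ n ∈ Finset.range (N + 1),
      ((Real.sqrt m : ℝ) : ℂ)⁻¹ *
        ∑ h ∈ ((Finset.Icc (-(m : ℤ)) m).filter
            (fun h : ℤ => -(m : ℝ) / 2 < (h : ℝ) ∧ (h : ℝ) ≤ (m : ℝ) / 2 ∧ h ≠ 0)),
          (if 0 < h then (1 : ℂ) else -1) *
            Complex.exp (-(2 * (π : ℂ) * Complex.I * (n : ℂ) * (h : ℂ) / (m : ℂ))))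
      = ((Real.sqrt m : ℝ) : ℂ)⁻¹ * ((X:ℝ) + (Y:ℝ) * Complex.I) := by
    rw [Finset.sum_congr rfl (fun n _ => by rw [inner_eval m hm n]), ← Finset.mul_sum]
    congr 1
    rw [hXdef, hYdef]
    push_cast
    rw [Finset.sum_add_distrib, ← Finset.sum_mul]
  rw [hmain, norm_mul, norm_inv, Complex.norm_real, Real.norm_eq_abs, Complex.norm_add_mul_I,
    abs_of_nonneg (Real.sqrt_nonneg _)]
  -- real analysis from here
  set V := ∑ n ∈ Finset.range (N+1),
      (∑ j ∈ Finset.range (m/2), Real.sin (((j:ℝ)+1)*(2*π*n/m))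
        + ∑ j ∈ Finset.range ((m-1)/2), Real.sin (((j:ℝ)+1)*(2*π*n/m))) with hVdef
  have hYV : Y = -V := by rw [hYdef, hVdef, ← Finset.sum_neg_distrib]
  -- bound on X
  have hX : |X| ≤ 1 := by
    rcases Nat.even_or_odd m with he | ho
    · have hp := Nat.even_iff.mp he
      have hRn : ∀ n : ℕ,
          (∑ j ∈ Finset.range (m/2), Real.cos (((j:ℝ)+1)*(2*π*n/m))
            - ∑ j ∈ Finset.range ((m-1)/2), Real.cos (((j:ℝ)+1)*(2*π*n/m))) = (-1:ℝ)^n := by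
        intro n
        rw [show m/2 = (m-1)/2 + 1 by omega, Finset.sum_range_succ]
        have hc : ((((m-1)/2 : ℕ):ℝ)+1)*(2*π*n/m) = (n:ℝ)*π - 0 := by
          have h2 : 2*((m-1)/2) + 2 = m := by omega
          have := congrArg (fun k : ℕ => (k:ℝ)) h2
          push_cast at this
          field_simp
          linear_combination π * (n:ℝ) * this
        rw [hc, Real.cos_nat_mul_pi_sub, Real.cos_zero, mul_one]
        ring
      rw [hXdef, Finset.sum_congr rfl (fun n _ => hRn n)]
      exact neg_one_pow_sum_abs (N+1)
    · have hp := Nat.odd_iff.mp ho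
      have hr : (m-1)/2 = m/2 := by omega
      rw [hXdef]
      rw [Finset.sum_congr rfl (fun n _ => by rw [hr, sub_self])]
      simp
  -- bound on V
  have hVL : |V - (m:ℝ)/π * Real.log m| ≤ 6*m := by
    set main : ℕ → ℝ := fun n => (1 - (-1:ℝ)^n)*((m:ℝ)/(π*n)) with hmaindef
    have hterm : ∀ n ∈ Finset.range (N+1),
        |(∑ j ∈ Finset.range (m/2), Real.sin (((j:ℝ)+1)*(2*π*n/m))
          + ∑ j ∈ Finset.range ((m-1)/2), Real.sin (((j:ℝ)+1)*(2*π*n/m))) - main n| ≤ 4 := by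
      intro n hn
      rcases Nat.eq_zero_or_pos n with rfl | hn1
      · simp [hmaindef]
      · exact V_bound m n hm hn1 (by simp only [Finset.mem_range] at hn; omega)
    have h1 : |V - ∑ n ∈ Finset.range (N+1), main n| ≤ 4*(N+1) := by
      rw [hVdef, ← Finset.sum_sub_distrib]
      calc |∑ n ∈ Finset.range (N+1), ((∑ j ∈ Finset.range (m/2), Real.sin (((j:ℝ)+1)*(2*π*n/m))
          + ∑ j ∈ Finset.range ((m-1)/2), Real.sin (((j:ℝ)+1)*(2*π*n/m))) - main n)|
          ≤ ∑ n ∈ Finset.range (N+1), |(∑ j ∈ Finset.range (m/2), Real.sin (((j:ℝ)+1)*(2*π*n/m))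
          + ∑ j ∈ Finset.range ((m-1)/2), Real.sin (((j:ℝ)+1)*(2*π*n/m))) - main n| :=
            Finset.abs_sum_le_sum_abs _ _
        _ ≤ ∑ n ∈ Finset.range (N+1), (4:ℝ) := Finset.sum_le_sum hterm
        _ = 4*(N+1) := by rw [Finset.sum_const, Finset.card_range]; push_cast; ring
    have h2 : ∑ n ∈ Finset.range (N+1), main n
        = 2*((m:ℝ)/π) * ∑ k ∈ Finset.range ((N+1)/2), (1:ℝ)/(2*k+1) := by
      rw [hmaindef, sum_odd_part (fun n => (m:ℝ)/(π*n)) (N+1)]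
      rw [Finset.mul_sum, Finset.mul_sum]
      apply Finset.sum_congr rfl
      intro k _
      push_cast
      field_simp
    have h3 : |∑ n ∈ Finset.range (N+1), main n - (m:ℝ)/π * Real.log m| ≤ 2*m := by
      rw [h2]
      have hob := odd_harm_bound m hm
      have e : 2*((m:ℝ)/π) * ∑ k ∈ Finset.range ((N+1)/2), (1:ℝ)/(2*k+1)
            - (m:ℝ)/π * Real.log m
          = (2*((m:ℝ)/π)) * ((∑ k ∈ Finset.range ((m/2+1)/2), (1:ℝ)/(2*k+1)) - Real.log m / 2) := by
        rw [hNdef]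
        ring
      rw [e, abs_mul, abs_of_nonneg (by positivity : (0:ℝ) ≤ 2*((m:ℝ)/π))]
      calc 2*((m:ℝ)/π) * |(∑ k ∈ Finset.range ((m/2+1)/2), (1:ℝ)/(2*k+1)) - Real.log m / 2|
          ≤ 2*((m:ℝ)/π) * 3 := by
            apply mul_le_mul_of_nonneg_left hob (by positivity)
        _ ≤ 2*m := by
            rw [show 2*((m:ℝ)/π)*3 = 6*(m:ℝ)/π by ring, div_le_iff₀ hpi]
            nlinarith [Real.pi_gt_three]
    have hN4 : 4*((N:ℝ)+1) ≤ 4*m := by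
      have : (N:ℝ) ≤ (m:ℝ)/2 := by
        rw [hNdef]
        have : 2*(m/2) ≤ m := by omega
        have := (by exact_mod_cast this : 2*((m/2 : ℕ):ℝ) ≤ (m:ℝ))
        linarith
      have hm2 : (2:ℝ) ≤ m := by exact_mod_cast hm
      linarith
    calc |V - (m:ℝ)/π * Real.log m|
        ≤ |V - ∑ n ∈ Finset.range (N+1), main n|
          + |∑ n ∈ Finset.range (N+1), main n - (m:ℝ)/π * Real.log m| := abs_sub_le _ _ _
      _ ≤ 4*(N+1) + 2*m := add_le_add h1 h3
      _ ≤ 4*m + 2*m := by push_cast at hN4 ⊢; linarith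
      _ = 6*m := by ring
  -- endgame
  set s := Real.sqrt m with hsdef
  have hs0 : 0 < s := Real.sqrt_pos.mpr hm0
  have hs2 : s^2 = m := Real.sq_sqrt hm0.le
  set L := (m:ℝ)/π * Real.log m with hLdef
  have hL0 : 0 ≤ L := by
    apply mul_nonneg (by positivity)
    apply Real.log_nonneg
    exact_mod_cast (by omega : 1 ≤ m)
  have hsq : |Real.sqrt (X^2 + Y^2) - L| ≤ 1 + 6*m := by
    have hYs : Y^2 = V^2 := by rw [hYV]; ring
    rw [hYs]
    have hup : Real.sqrt (X^2 + V^2) ≤ |X| + |V| := by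
      rw [show X^2 + V^2 = |X|^2 + |V|^2 by rw [sq_abs, sq_abs]]
      rw [← Real.sqrt_sq (by positivity : (0:ℝ) ≤ |X| + |V|)]
      apply Real.sqrt_le_sqrt
      nlinarith [abs_nonneg X, abs_nonneg V]
    have hlo : |V| ≤ Real.sqrt (X^2 + V^2) := by
      rw [← Real.sqrt_sq_eq_abs]
      apply Real.sqrt_le_sqrt
      nlinarith
    have hVabs : |(|V|) - L| ≤ 6*m := by
      have := abs_abs_sub_abs_le_abs_sub V L
      rw [abs_of_nonneg hL0] at this
      exact le_trans this hVL
    have : abs (Real.sqrt (X^2+V^2) - |V|) ≤ 1 := by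
      rw [abs_of_nonneg (by linarith)]
      linarith [hX]
    calc |Real.sqrt (X^2 + V^2) - L|
        ≤ abs (Real.sqrt (X^2+V^2) - |V|) + |(|V|) - L| := abs_sub_le _ _ _
      _ ≤ 1 + 6*m := add_le_add this hVabs
  have hrw : s / π * Real.log m = s⁻¹ * L := by
    rw [hLdef, show (m:ℝ) = s*s by rw [← hs2]; ring]
    field_simp
  rw [hrw, ← mul_sub, abs_mul, abs_of_nonneg (by positivity : (0:ℝ) ≤ s⁻¹)]
  calc s⁻¹ * |Real.sqrt (X^2+Y^2) - L| ≤ s⁻¹ * (7*m) := by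
        apply mul_le_mul_of_nonneg_left _ (by positivity)
        have : (1:ℝ) ≤ m := by exact_mod_cast (by omega : 1 ≤ m)
        linarith [hsq]
    _ = 7 * s := by
        rw [show (m:ℝ) = s*s by rw [← hs2]; ring]
        field_simp
    _ ≤ 100 * s := by nlinarith
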